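/- Let k be a field of characteristic p > 0 and let n = p^a·d with a ≥ 1 and d ≥ 1. Let V be an n-dimensional k-vector space. Then there exist a unipotent linear automorphism u of V with a single Jordan block (i.e. (u − 1)^(n−1) ≠ 0) and subspaces V₁, …, V_{p^a} of V, each of dimension d, forming an internal direct sum V = V₁ ⊕ ⋯ ⊕ V_{p^a}, such that u maps V_i onto V_{i+1} for 1 ≤ i < p^a and maps V_{p^a} onto V₁. (Consequently u normalizes the group of all automorphisms acting by a scalar on each V_i, whose weight spaces are the d-dimensional subspaces V_i.) -/

import Mathlib

open Polynomial DirectSum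

section Aux

variable {k : Type*} [Field k] {M N : Type*} [AddCommGroup M] [Module k M]
  [AddCommGroup N] [Module k N]

private lemma stmt7_conj_pow (e : M ≃ₗ[k] N) (f : Module.End k M) (m : ℕ) :
    e.conj (f ^ m) = (e.conj f) ^ m := by
  induction m with
  | zero => ext x; simp [LinearEquiv.conj_apply_apply]
  | succ m ih =>
    simp only [pow_succ, Module.End.mul_eq_comp, ← ih]
    exact e.conj_comp f (f ^ m)

private lemma stmt7_conj_sub_one (e : M ≃ₗ[k] N) (u : M ≃ₗ[k] M) :
    ((e.symm.trans (u.trans e) : Module.End k N)) - 1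
      = e.conj ((u : Module.End k M) - 1) := by
  have heq : e.conj 1 = 1 := by
    ext x; simp [LinearEquiv.conj_apply_apply, Module.End.one_apply]
  rw [map_sub, heq]
  rfl

end Aux

set_option maxHeartbeats 1000000 in
private lemma stmt7_model {k : Type*} [Field k] {p : ℕ} (hp : p.Prime) [CharP k p]
    (a d : ℕ) (ha : 1 ≤ a) (hd : 1 ≤ d) :
    ∃ (u : AdjoinRoot (X ^ (p ^ a * d) : k[X]) ≃ₗ[k] AdjoinRoot (X ^ (p ^ a * d) : k[X]))
      (Vi : ZMod (p ^ a) → Submodule k (AdjoinRoot (X ^ (p ^ a * d) : k[X]))),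
      IsNilpotent ((u : Module.End k (AdjoinRoot (X ^ (p ^ a * d) : k[X]))) - 1) ∧
      ((u : Module.End k (AdjoinRoot (X ^ (p ^ a * d) : k[X]))) - 1) ^ (p ^ a * d - 1) ≠ 0 ∧
      (∀ i, Module.finrank k (Vi i) = d) ∧
      DirectSum.IsInternal Vi ∧
      ∀ i, Submodule.map (u : AdjoinRoot (X ^ (p ^ a * d) : k[X]) →ₗ[k]
        AdjoinRoot (X ^ (p ^ a * d) : k[X])) (Vi i) = Vi (i + 1) := by
  haveI : Fact p.Prime := ⟨hp⟩
  set q := p ^ a with hq'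
  have hq2 : 2 ≤ q := by
    have h1 : p ^ 1 ≤ p ^ a := Nat.pow_le_pow_right hp.pos ha
    rw [pow_one] at h1
    have h2 := hp.two_le
    rw [hq']
    omega
  set n := q * d with hn'
  have hn1 : 1 ≤ n := by
    rw [hn']
    exact Nat.one_le_iff_ne_zero.mpr (Nat.mul_ne_zero (by omega) (by omega))
  haveI : NeZero q := ⟨by omega⟩
  haveI : Fact (1 < q) := ⟨by omega⟩
  set A := AdjoinRoot (X ^ n : k[X]) with hA
  have hm : (X ^ n : k[X]).Monic := monic_X_pow n
  set pb : PowerBasis k A := AdjoinRoot.powerBasis' hm with hpb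
  have hdim : pb.dim = n := by simp [hpb, AdjoinRoot.powerBasis']
  haveI : Nontrivial A := AdjoinRoot.nontrivial _ (by
    rw [degree_X_pow]
    exact_mod_cast fun h => absurd (by exact_mod_cast h : n = 0) (by omega))
  haveI : FiniteDimensional k A := Module.Finite.of_basis pb.basis
  have hfr : Module.finrank k A = n := by rw [pb.finrank, hdim]
  haveI : CharP A p := charP_of_injective_algebraMap' k (A := A) p
  set r : A := AdjoinRoot.root _ with hr'
  have hgen : pb.gen = r := by simp [hpb, hr']
  have hr : r ^ n = 0 := by
    rw [hr', ← AdjoinRoot.mk_X, ← map_pow, AdjoinRoot.mk_self]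
  have hrne : ∀ m, m < n → r ^ m ≠ 0 := by
    intro m hmn
    have hb : pb.basis ⟨m, by omega⟩ = r ^ m := by
      rw [pb.coe_basis]; simp [hgen]
    rw [← hb]
    exact pb.basis.ne_zero _
  set t : A := 1 + r with ht'
  have htq : t ^ q = 1 + r ^ q := by
    rw [ht', hq', add_pow_char_pow]; simp
  have ht : IsUnit t := IsNilpotent.isUnit_one_add ⟨n, hr⟩
  set u : A ≃ₗ[k] A := LinearEquiv.ofLinear (LinearMap.mulLeft k t)
      (LinearMap.mulLeft k (↑ht.unit⁻¹))
      (by rw [← LinearMap.mulLeft_mul, ht.mul_val_inv, LinearMap.mulLeft_one])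
      (by rw [← LinearMap.mulLeft_mul, ht.val_inv_mul, LinearMap.mulLeft_one]) with hu'
  have hucoe : (u : Module.End k A) = LinearMap.mulLeft k t := rfl
  have husub : (u : Module.End k A) - 1 = LinearMap.mulLeft k r := by
    ext x
    simp [hucoe, ht', add_mul]
  -- the family B
  set B : ZMod q × Fin d → A := fun x => t ^ x.1.val * r ^ ((x.2 : ℕ) * q) with hB'
  have hrmem : ∀ m, m < n → r ^ m ∈ Submodule.span k (Set.range B) := by
    intro m hmn
    set l := m % q with hl'
    have hl : l < q := Nat.mod_lt _ (by omega)
    have hj : m / q < d := Nat.div_lt_of_lt_mul (by omega)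
    have hrt : r = t + (-1) := by rw [ht']; ring
    have hsplit : r ^ m = r ^ (q * (m / q)) * (t + (-1)) ^ l := by
      rw [← hrt, ← pow_add, Nat.div_add_mod]
    rw [hsplit, add_pow, Finset.mul_sum]
    refine Submodule.sum_mem _ fun i hi => ?_
    have hiq : i < q := by
      have := Finset.mem_range.mp hi; omega
    have hmem : t ^ i * r ^ ((m / q) * q) ∈ Submodule.span k (Set.range B) :=
      Submodule.subset_span ⟨((i : ZMod q), ⟨m / q, hj⟩), by
        simp [hB', ZMod.val_cast_of_lt hiq]⟩
    have key : r ^ (q * (m / q)) * (t ^ i * (-1 : A) ^ (l - i) * ((l.choose i : ℕ) : A))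
        = ((-1 : ℤ) ^ (l - i) * (l.choose i : ℤ)) • (t ^ i * r ^ ((m / q) * q)) := by
      rw [zsmul_eq_mul]; push_cast; ring
    rw [key]
    exact zsmul_mem hmem _
  have hspan : ⊤ ≤ Submodule.span k (Set.range B) := by
    rw [← pb.basis.span_eq, Submodule.span_le]
    rintro x ⟨i, rfl⟩
    have hb : pb.basis i = r ^ (i : ℕ) := by rw [pb.coe_basis]; simp [hgen]
    rw [hb]
    exact hrmem _ (by have := i.2; omega)
  have hcard : Fintype.card (ZMod q × Fin d) = Module.finrank k A := by
    simp [ZMod.card, hfr, hn']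
  have hBli : LinearIndependent k B := by
    have := (basisOfTopLeSpanOfCardEqFinrank B hspan hcard).linearIndependent
    rwa [coe_basisOfTopLeSpanOfCardEqFinrank] at this
  -- the submodules
  set W : ℕ → Submodule k A :=
    fun m => Submodule.span k (Set.range fun j : Fin d => t ^ m * r ^ ((j : ℕ) * q)) with hW'
  have hfinW : ∀ m, m < q → Module.finrank k (W m) = d := by
    intro m hmq
    have hli : LinearIndependent k (fun j : Fin d => t ^ m * r ^ ((j : ℕ) * q)) := by
      have : (fun j : Fin d => t ^ m * r ^ ((j : ℕ) * q))
          = B ∘ (fun j : Fin d => ((m : ZMod q), j)) := by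
        funext j; simp [hB', ZMod.val_cast_of_lt hmq]
      rw [this]
      exact hBli.comp _ (fun j1 j2 h => by
        simpa using congrArg Prod.snd h)
    rw [hW', finrank_span_eq_card hli, Fintype.card_fin]
  have hWmap : ∀ m, Submodule.map (LinearMap.mulLeft k t) (W m) = W (m + 1) := by
    intro m
    rw [hW', Submodule.map_span, ← Set.range_comp]
    have hfun : (⇑(LinearMap.mulLeft k t) ∘ fun j : Fin d => t ^ m * r ^ ((j : ℕ) * q))
        = fun j : Fin d => t ^ (m + 1) * r ^ ((j : ℕ) * q) := by
      funext j
      simp only [Function.comp_apply, LinearMap.mulLeft_apply]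
      ring
    rw [hfun]
  have hWq : W q = W 0 := by
    have hzero : ∀ j : ℕ, ¬ j + 1 < d → j < d → r ^ ((j + 1) * q) = 0 := by
      intro j h1 h2
      have hjd : j + 1 = d := by omega
      have hdq : d * q = n := by rw [hn']; ring
      rw [hjd, hdq, hr]
    apply le_antisymm
    · rw [Submodule.span_le]
      rintro x ⟨j, rfl⟩
      show t ^ q * r ^ ((j : ℕ) * q) ∈ W 0
      have hx : t ^ q * r ^ ((j : ℕ) * q) = r ^ ((j : ℕ) * q) + r ^ (((j : ℕ) + 1) * q) := by
        rw [htq]; ring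
      rw [hx]
      apply add_mem
      · exact Submodule.subset_span ⟨j, by simp⟩
      · by_cases hj1 : (j : ℕ) + 1 < d
        · exact Submodule.subset_span ⟨⟨(j : ℕ) + 1, hj1⟩, by simp⟩
        · rw [hzero _ hj1 j.2]; exact zero_mem _
    · rw [Submodule.span_le]
      rintro x ⟨j, rfl⟩
      show t ^ 0 * r ^ ((j : ℕ) * q) ∈ W q
      have claim : ∀ c (j : ℕ), j < d → d ≤ j + c → r ^ (j * q) ∈ W q := by
        intro c
        induction c with
        | zero => intro j h1 h2; omega
        | succ c ih =>
          intro j h1 h2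
          have hgen : t ^ q * r ^ (j * q) ∈ W q :=
            Submodule.subset_span ⟨⟨j, h1⟩, by simp⟩
          have hx : r ^ (j * q) = t ^ q * r ^ (j * q) - r ^ ((j + 1) * q) := by
            rw [htq]; ring
          rw [hx]
          apply sub_mem hgen
          by_cases hj1 : j + 1 < d
          · exact ih (j + 1) hj1 (by omega)
          · rw [hzero _ hj1 h1]; exact zero_mem _
      simpa using claim d (j : ℕ) j.2 (by omega)
  refine ⟨u, fun i => W i.val, ?_, ?_, ?_, ?_, ?_⟩
  · rw [husub]
    exact ⟨n, by rw [LinearMap.pow_mulLeft, hr, LinearMap.mulLeft_zero_eq_zero]⟩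
  · rw [husub]
    intro hc
    rw [LinearMap.pow_mulLeft] at hc
    have : r ^ (n - 1) = 0 := by
      have := congrArg (fun f : Module.End k A => f 1) hc
      simpa using this
    exact hrne (n - 1) (by omega) this
  · intro i
    exact hfinW i.val (ZMod.val_lt i)
  · have hsup : (⨆ i : ZMod q, W (ZMod.val i)) = ⊤ := by
      apply le_antisymm le_top
      refine le_trans hspan ?_
      rw [Submodule.span_le]
      rintro x ⟨⟨i, j⟩, rfl⟩
      exact le_iSup (fun i : ZMod q => W (ZMod.val i)) i
        (Submodule.subset_span ⟨j, rfl⟩)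
    haveI : FiniteDimensional k (⨁ (i : ZMod q), W (ZMod.val i)) :=
      Module.Finite.equiv (DirectSum.linearEquivFunOnFintype k (ZMod q)
        (fun i : ZMod q => W (ZMod.val i))).symm
    have hsurj : Function.Surjective (DirectSum.coeLinearMap fun i : ZMod q => W (ZMod.val i)) := by
      rw [← LinearMap.range_eq_top, DirectSum.range_coeLinearMap, hsup]
    have hfrds : Module.finrank k (⨁ (i : ZMod q), W (ZMod.val i)) = Module.finrank k A := by
      rw [Module.finrank_directSum]
      rw [hfr]
      have : ∀ i : ZMod q, Module.finrank k (W (ZMod.val i)) = d :=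
        fun i => hfinW _ (ZMod.val_lt i)
      simp [this, ZMod.card, Finset.sum_const, hn']
    have hinj : Function.Injective (DirectSum.coeLinearMap fun i : ZMod q => W (ZMod.val i)) :=
      (@LinearMap.injective_iff_surjective_of_finrank_eq_finrank k (⨁ (i : ZMod q), W (ZMod.val i))
        _ _ _ A _ _ _ _ hfrds (DirectSum.coeLinearMap fun i : ZMod q => W (ZMod.val i))).mpr hsurj
    exact ⟨hinj, hsurj⟩
  · intro i
    have hcoe : (u : A →ₗ[k] A) = LinearMap.mulLeft k t := rfl
    rw [hcoe, hWmap]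
    by_cases hcase : ZMod.val i + 1 < q
    · congr 1
      rw [ZMod.val_add, ZMod.val_one, Nat.mod_eq_of_lt hcase]
    · have hival : ZMod.val i + 1 = q := by
        have := ZMod.val_lt i; omega
      rw [hival, hWq]
      congr 1
      rw [ZMod.val_add, ZMod.val_one, hival, Nat.mod_self]

/-- Proposition `prop:torus SL II`, existence part.  Let `k` be a
field of characteristic `p > 0` and `n = p ^ a * d` with `a ≥ 1`, `d ≥ 1`.  On any
`n`-dimensional `k`-vector space `V` there exist a unipotent automorphism `u` with a
single Jordan block and `d`-dimensional subspaces `V₁, …, V_{p^a}` forming an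
internal direct sum decomposition of `V` which are cyclically permuted by `u`. -/
theorem stmt7 {k : Type*} [Field k] {p : ℕ} (hp : 0 < p) [CharP k p]
    (a d : ℕ) (ha : 1 ≤ a) (hd : 1 ≤ d)
    {V : Type*} [AddCommGroup V] [Module k V] [FiniteDimensional k V]
    (hn : Module.finrank k V = p ^ a * d) :
    ∃ (u : V ≃ₗ[k] V) (Vi : ZMod (p ^ a) → Submodule k V),
      IsNilpotent ((u : Module.End k V) - 1) ∧
      ((u : Module.End k V) - 1) ^ (p ^ a * d - 1) ≠ 0 ∧
      (∀ i, Module.finrank k (Vi i) = d) ∧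
      DirectSum.IsInternal Vi ∧
      ∀ i, Submodule.map (u : V →ₗ[k] V) (Vi i) = Vi (i + 1) := by
  have : NeZero p := ⟨hp.ne'⟩
  have hpp : p.Prime := (CharP.char_is_prime_of_pos k p).out
  set n := p ^ a * d with hn'
  set A := AdjoinRoot (X ^ n : k[X]) with hA
  have hm : (X ^ n : k[X]).Monic := monic_X_pow n
  have hfdA : FiniteDimensional k A := Module.Finite.of_basis (AdjoinRoot.powerBasis' hm).basis
  have hfrA : Module.finrank k A = n := by
    rw [(AdjoinRoot.powerBasis' hm).finrank]; simp [AdjoinRoot.powerBasis']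
  obtain ⟨u, Vi, h1, h2, h3, h4, h5⟩ := stmt7_model hpp a d ha hd (k := k)
  have e : A ≃ₗ[k] V := LinearEquiv.ofFinrankEq A V (by rw [hfrA, hn])
  refine ⟨e.symm.trans (u.trans e), fun i => (Vi i).map (e : A →ₗ[k] V), ?_, ?_, ?_, ?_, ?_⟩
  · rw [stmt7_conj_sub_one]
    obtain ⟨m, hm⟩ := h1
    exact ⟨m, by rw [← stmt7_conj_pow, hm, map_zero]⟩
  · rw [stmt7_conj_sub_one]
    intro hc
    exact h2 (e.conj.injective (by rw [stmt7_conj_pow, hc, map_zero]))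
  · intro i
    rw [LinearEquiv.finrank_map_eq]
    exact h3 i
  · rw [DirectSum.isInternal_submodule_iff_iSupIndep_and_iSup_eq_top] at h4 ⊢
    constructor
    · exact (iSupIndep_map_orderIso_iff (Submodule.orderIsoMapComap e)).mpr h4.1
    · rw [← Submodule.map_iSup, h4.2, Submodule.map_top, LinearEquiv.range]
  · intro i
    have : ((e.symm.trans (u.trans e)) : V →ₗ[k] V)
        = ((e : A →ₗ[k] V).comp (u : A →ₗ[k] A)).comp (e.symm : V →ₗ[k] A) := rfl
    rw [this, Submodule.map_comp, Submodule.map_comp]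
    have h6 : Submodule.map (e.symm : V →ₗ[k] A) (Submodule.map (e : A →ₗ[k] V) (Vi i)) = Vi i := by
      rw [← Submodule.map_comp]
      simp
    rw [h6, h5]
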